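/- Let G = G₁ ⊕ G₂ be an abelian group, where G₂ = ⊕_{α < λ} ℤ x_α is free abelian on uncountably many generators (λ > ℵ₀). Then G does not admit a Polish group topology. -/

import Mathlib

open Finset Filter Topology

section defs
variable {G : Type} [AddCommGroup G]

/-- ratio products -/
def rrP (k : ℕ → ℕ) (m n : ℕ) : ℕ := ∏ i ∈ Finset.Ico m n, k i

def PPs (y : ℕ → G) (k : ℕ → ℕ) (m n : ℕ) : G := ∑ i ∈ Finset.Ico m n, rrP k m i • y i

def bbs (f : G →+ ℤ) (y : ℕ → G) (k : ℕ → ℕ) (n : ℕ) : ℤ :=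
  ∑ i ∈ Finset.Ico 0 n, (rrP k 0 i : ℤ) * f (y i)

lemma rrP_congr {k k' : ℕ → ℕ} {N : ℕ} (h : ∀ i, i < N → k i = k' i) {m n : ℕ} (hn : n ≤ N) :
    rrP k m n = rrP k' m n :=
  Finset.prod_congr rfl fun i hi => h i (lt_of_lt_of_le (Finset.mem_Ico.1 hi).2 hn)

lemma PPs_congr {y y' : ℕ → G} {k k' : ℕ → ℕ} {N : ℕ}
    (hy : ∀ i, i < N → y i = y' i) (hk : ∀ i, i < N → k i = k' i) {m n : ℕ} (hn : n ≤ N) :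
    PPs y k m n = PPs y' k' m n := by
  refine Finset.sum_congr rfl fun i hi => ?_
  have hiN : i < N := lt_of_lt_of_le (Finset.mem_Ico.1 hi).2 hn
  rw [rrP_congr hk hiN.le, hy i hiN]

lemma bbs_congr {f : G →+ ℤ} {y y' : ℕ → G} {k k' : ℕ → ℕ} {N : ℕ}
    (hy : ∀ i, i < N → y i = y' i) (hk : ∀ i, i < N → k i = k' i) {n : ℕ} (hn : n ≤ N) :
    bbs f y k n = bbs f y' k' n := by
  refine Finset.sum_congr rfl fun i hi => ?_
  have hiN : i < N := lt_of_lt_of_le (Finset.mem_Ico.1 hi).2 hn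
  rw [rrP_congr hk hiN.le, hy i hiN]

end defs
section spec
variable {G : Type} [AddCommGroup G] [MetricSpace G] [IsTopologicalAddGroup G]

/-- the specification of the choice made at step `n`, given the previous data `s`. -/
def Spec (f : G →+ ℤ) (n : ℕ) (s : ℕ → G × ℕ) (p : G × ℕ) : Prop :=
  f p.1 ≠ 0 ∧
  (∀ m ≤ n, dist (PPs (fun i => (s i).1) (fun i => (s i).2) m n
      + rrP (fun i => (s i).2) m n • p.1)
      (PPs (fun i => (s i).1) (fun i => (s i).2) m n) < (1/2 : ℝ)^n) ∧
  p.2 = 2 * ((bbs f (fun i => (s i).1) (fun i => (s i).2) n).natAbs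
      + rrP (fun i => (s i).2) 0 n * (f p.1).natAbs) + 2

lemma spec_congr (f : G →+ ℤ) (n : ℕ) {s s' : ℕ → G × ℕ} (h : ∀ i, i < n → s i = s' i)
    (p : G × ℕ) (hs : Spec f n s p) : Spec f n s' p := by
  have hy : ∀ i, i < n → (s i).1 = (s' i).1 := fun i hi => by rw [h i hi]
  have hk : ∀ i, i < n → (s i).2 = (s' i).2 := fun i hi => by rw [h i hi]
  obtain ⟨h1, h2, h3⟩ := hs
  refine ⟨h1, fun m hm => ?_, ?_⟩
  · rw [← PPs_congr hy hk le_rfl, ← rrP_congr hk (le_refl n)]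
    exact h2 m hm
  · rw [← bbs_congr hy hk le_rfl, ← rrP_congr hk (le_refl n)]
    exact h3

lemma exists_spec (f : G →+ ℤ) (key : ∀ V ∈ 𝓝 (0 : G), ∃ y ∈ V, f y ≠ 0)
    (n : ℕ) (s : ℕ → G × ℕ) : ∃ p, Spec f n s p := by
  set y0 : ℕ → G := fun i => (s i).1
  set k0 : ℕ → ℕ := fun i => (s i).2
  have hU : (⋂ m ∈ Finset.range (n+1),
      {z : G | dist (PPs y0 k0 m n + rrP k0 m n • z) (PPs y0 k0 m n) < (1/2 : ℝ)^n}) ∈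
      𝓝 (0 : G) := by
    rw [Filter.biInter_finset_mem]
    intro m _
    have hc : Continuous fun z : G =>
        dist (PPs y0 k0 m n + rrP k0 m n • z) (PPs y0 k0 m n) :=
      (continuous_const.add (continuous_nsmul _)).dist continuous_const
    have hopen : IsOpen {z : G |
        dist (PPs y0 k0 m n + rrP k0 m n • z) (PPs y0 k0 m n) < (1/2 : ℝ)^n} :=
      isOpen_lt hc continuous_const
    refine hopen.mem_nhds ?_
    simp only [Set.mem_setOf_eq, smul_zero, add_zero, dist_self]
    positivity
  obtain ⟨z, hz, hfz⟩ := key _ hU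
  refine ⟨(z, 2 * ((bbs f y0 k0 n).natAbs + rrP k0 0 n * (f z).natAbs) + 2), hfz, ?_, rfl⟩
  intro m hm
  have := Set.mem_iInter₂.1 hz m (Finset.mem_range.2 (Nat.lt_succ_of_le hm))
  exact this

theorem exists_good_seq (f : G →+ ℤ) (key : ∀ V ∈ 𝓝 (0 : G), ∃ y ∈ V, f y ≠ 0) :
    ∃ (y : ℕ → G) (k : ℕ → ℕ), ∀ n,
      f (y n) ≠ 0 ∧
      (∀ m ≤ n, dist (PPs y k m n + rrP k m n • y n) (PPs y k m n) < (1/2 : ℝ)^n) ∧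
      k n = 2 * ((bbs f y k n).natAbs + rrP k 0 n * (f (y n)).natAbs) + 2 := by
  classical
  choose pick hpick using exists_spec f key
  let c : ℕ → ℕ → G × ℕ := fun n =>
    Nat.rec (fun _ => ((0 : G), (1 : ℕ))) (fun m s => Function.update s m (pick m s)) n
  have hc : ∀ n, c (n+1) = Function.update (c n) n (pick n (c n)) := fun n => rfl
  set sInf : ℕ → G × ℕ := fun i => pick i (c i) with hsInf
  have hagree : ∀ n i, i < n → c n i = sInf i := by
    intro n
    induction n with
    | zero => intro i hi; omega
    | succ n ih =>
      intro i hi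
      rw [hc n]
      rcases Nat.lt_succ_iff_lt_or_eq.1 hi with hi' | rfl
      · rw [Function.update_of_ne (by omega : i ≠ n)]
        exact ih i hi'
      · rw [Function.update_self]
  have hspec : ∀ n, Spec f n sInf (sInf n) := by
    intro n
    exact spec_congr f n (hagree n) _ (hpick n (c n))
  exact ⟨fun i => (sInf i).1, fun i => (sInf i).2, fun n => hspec n⟩

end spec
section contra
variable {G : Type} [AddCommGroup G] [MetricSpace G] [CompleteSpace G] [IsTopologicalAddGroup G]

theorem contra_of_good_seq (f : G →+ ℤ) (y : ℕ → G) (k : ℕ → ℕ)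
    (h : ∀ n, f (y n) ≠ 0 ∧
      (∀ m ≤ n, dist (PPs y k m n + rrP k m n • y n) (PPs y k m n) < (1/2 : ℝ)^n) ∧
      k n = 2 * ((bbs f y k n).natAbs + rrP k 0 n * (f (y n)).natAbs) + 2) : False := by
  classical
  -- basic facts about k and products
  have hk2 : ∀ n, 2 ≤ k n := fun n => by rw [(h n).2.2]; omega
  have hd1 : ∀ m n, 1 ≤ rrP k m n := by
    intro m n
    refine Finset.one_le_prod' fun i _ => ?_
    exact le_trans (by norm_num) (hk2 i)
  have hdmul : ∀ {m n l : ℕ}, m ≤ n → n ≤ l → rrP k m n * rrP k n l = rrP k m l := by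
    intro m n l h1 h2
    exact Finset.prod_Ico_consecutive _ h1 h2
  have hpow : ∀ n, 2^n ≤ rrP k 0 n := by
    intro n
    calc (2:ℕ)^n = ∏ _i ∈ Finset.Ico 0 n, 2 := by
          rw [Finset.prod_const, Nat.card_Ico, Nat.sub_zero]
      _ ≤ rrP k 0 n := Finset.prod_le_prod' fun i _ => hk2 i
  -- each tail sequence is Cauchy
  have hcauchy : ∀ m, CauchySeq (fun N => PPs y k m N) := by
    intro m
    refine cauchySeq_of_le_geometric (1/2) 1 (by norm_num) fun N => ?_
    rcases le_or_gt m N with hmN | hmN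
    · have hstep : PPs y k m (N+1) = PPs y k m N + rrP k m N • y N := by
        unfold PPs
        rw [Finset.sum_Ico_succ_top hmN]
      rw [hstep, dist_comm, one_mul]
      exact ((h N).2.1 m hmN).le
    · have he : Finset.Ico m N = ∅ := Finset.Ico_eq_empty (by omega)
      have he' : Finset.Ico m (N+1) = ∅ := Finset.Ico_eq_empty (by omega)
      unfold PPs
      rw [he, he']
      simp only [Finset.sum_empty, dist_self]
      positivity
  have hlim : ∀ m, ∃ t : G, Tendsto (fun N => PPs y k m N) atTop (𝓝 t) :=
    fun m => cauchySeq_tendsto_of_complete (hcauchy m)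
  choose t ht using hlim
  -- algebraic splitting
  have hsplit : ∀ m N, m ≤ N → PPs y k 0 N = PPs y k 0 m + rrP k 0 m • PPs y k m N := by
    intro m N hmN
    unfold PPs
    rw [Finset.smul_sum, ← Finset.sum_Ico_consecutive _ (Nat.zero_le m) hmN]
    congr 1
    refine Finset.sum_congr rfl fun i hi => ?_
    have hmi : m ≤ i := (Finset.mem_Ico.1 hi).1
    rw [← hdmul (Nat.zero_le m) hmi, mul_smul]
  -- limit identity
  have hlimid : ∀ m, t 0 = PPs y k 0 m + rrP k 0 m • t m := by
    intro m
    have h1 : Tendsto (fun N => PPs y k 0 m + rrP k 0 m • PPs y k m N) atTop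
        (𝓝 (PPs y k 0 m + rrP k 0 m • t m)) := by
      exact (((continuous_nsmul (rrP k 0 m)).tendsto _).comp (ht m)).const_add _
    have h2 : Tendsto (fun N => PPs y k 0 N) atTop (𝓝 (PPs y k 0 m + rrP k 0 m • t m)) := by
      refine h1.congr' ?_
      filter_upwards [eventually_ge_atTop m] with N hN
      exact (hsplit m N hN).symm
    exact tendsto_nhds_unique (ht 0) h2
  -- apply f
  have hfP : ∀ m, f (PPs y k 0 m) = bbs f y k m := by
    intro m
    unfold PPs bbs
    rw [map_sum]
    refine Finset.sum_congr rfl fun i _ => ?_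
    rw [map_nsmul, nsmul_eq_mul]
  set a : ℤ := f (t 0) with ha
  have hdvd : ∀ m, a - bbs f y k m = (rrP k 0 m : ℤ) * f (t m) := by
    intro m
    rw [ha, hlimid m, map_add, map_nsmul, nsmul_eq_mul, hfP m]
    ring
  -- bound on bbs
  have hbnd : ∀ m, 2 * (bbs f y k m).natAbs < rrP k 0 m := by
    intro m
    induction m with
    | zero =>
      unfold bbs rrP
      simp
    | succ n ih =>
      have hb : bbs f y k (n+1) = bbs f y k n + (rrP k 0 n : ℤ) * f (y n) := by
        unfold bbs
        rw [Finset.sum_Ico_succ_top (Nat.zero_le n)]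
      have habs : (bbs f y k (n+1)).natAbs ≤
          (bbs f y k n).natAbs + rrP k 0 n * (f (y n)).natAbs := by
        rw [hb]
        refine le_trans (Int.natAbs_add_le _ _) ?_
        rw [Int.natAbs_mul, Int.natAbs_natCast]
      have hdn : rrP k 0 (n+1) = rrP k 0 n * k n := by
        unfold rrP
        rw [Finset.prod_Ico_succ_top (Nat.zero_le n)]
      have hkn := (h n).2.2
      have h1 : 1 ≤ rrP k 0 n := hd1 0 n
      calc 2 * (bbs f y k (n+1)).natAbs
          ≤ 2 * ((bbs f y k n).natAbs + rrP k 0 n * (f (y n)).natAbs) := by omega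
        _ < k n := by omega
        _ ≤ rrP k 0 n * k n := Nat.le_mul_of_pos_left _ (by omega)
        _ = rrP k 0 (n+1) := hdn.symm
  -- final contradiction
  set M : ℕ := 2 * a.natAbs
  have hlarge : ∀ m, M ≤ m → a = bbs f y k m := by
    intro m hm
    have h2a : 2 * a.natAbs < rrP k 0 m := by
      calc 2 * a.natAbs < 2 ^ (2 * a.natAbs) := Nat.lt_two_pow_self
        _ ≤ 2 ^ m := Nat.pow_le_pow_right (by norm_num) hm
        _ ≤ rrP k 0 m := hpow m
    have habs : (a - bbs f y k m).natAbs < ((rrP k 0 m : ℤ)).natAbs := by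
      rw [Int.natAbs_natCast]
      have := Int.natAbs_sub_le a (bbs f y k m)
      have := hbnd m
      omega
    have hdvd' : (rrP k 0 m : ℤ) ∣ (a - bbs f y k m) := ⟨f (t m), hdvd m⟩
    have := Int.eq_zero_of_dvd_of_natAbs_lt_natAbs hdvd' habs
    omega
  have e1 := hlarge M le_rfl
  have e2 := hlarge (M+1) (Nat.le_succ M)
  have hb : bbs f y k (M+1) = bbs f y k M + (rrP k 0 M : ℤ) * f (y M) := by
    unfold bbs
    rw [Finset.sum_Ico_succ_top (Nat.zero_le M)]
  have hfy : f (y M) ≠ 0 := (h M).1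
  have hrpos : (0:ℤ) < (rrP k 0 M : ℤ) := by exact_mod_cast hd1 0 M
  have : (rrP k 0 M : ℤ) * f (y M) = 0 := by omega
  rcases mul_eq_zero.1 this with h' | h'
  · omega
  · exact hfy h'

end contra

theorem dudley {G : Type} [AddCommGroup G] [TopologicalSpace G] [IsTopologicalAddGroup G]
    [PolishSpace G] (f : G →+ ℤ) (hdense : Dense {x : G | f x = 0})
    (x : G) (hx : f x ≠ 0) : False := by
  have hker : {x : G | f x = 0} = (f.ker : Set G) := by
    ext z; simp [AddMonoidHom.mem_ker]
  have key : ∀ V ∈ 𝓝 (0 : G), ∃ y ∈ V, f y ≠ 0 := by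
    intro V hV
    by_contra hcon
    push_neg at hcon
    have hmem : (f.ker : Set G) ∈ 𝓝 (0 : G) :=
      Filter.mem_of_superset hV fun y hy => by
        simpa [AddMonoidHom.mem_ker] using hcon y hy
    have hopen := AddSubgroup.isOpen_of_mem_nhds f.ker hmem
    have hclosed := AddSubgroup.isClosed_of_isOpen f.ker hopen
    have : (f.ker : Set G) = Set.univ := by
      rw [← hclosed.closure_eq]
      exact (hker ▸ hdense).closure_eq
    have hxk : x ∈ (f.ker : Set G) := by rw [this]; trivial
    exact hx hxk
  letI := TopologicalSpace.upgradeIsCompletelyMetrizable G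
  obtain ⟨y, k, h⟩ := exists_good_seq f key
  exact contra_of_good_seq f y k h

theorem stmt_6 {G G₁ : Type} [AddCommGroup G] [AddCommGroup G₁]
    {ι : Type} [Uncountable ι] (e : G ≃+ G₁ × (ι →₀ ℤ)) :
    ¬ ∃ τ : TopologicalSpace G, @IsTopologicalAddGroup G τ _ ∧ @PolishSpace G τ := by
  rintro ⟨τ, hτ, hP⟩
  letI := τ
  haveI := hτ
  haveI := hP
  obtain ⟨D, hDc, hDd⟩ := TopologicalSpace.exists_countable_dense G
  set T : Set ι := ⋃ d ∈ D, ((e d).2.support : Set ι) with hT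
  have hTc : T.Countable :=
    hDc.biUnion fun d _ => ((e d).2.support.finite_toSet).countable
  have : ∃ β : ι, β ∉ T := by
    by_contra hcon
    push_neg at hcon
    have : T = Set.univ := Set.eq_univ_of_forall hcon
    rw [this] at hTc
    exact (Set.not_countable_univ) hTc
  obtain ⟨β, hβ⟩ := this
  set f : G →+ ℤ := (Finsupp.applyAddHom β).comp
    ((AddMonoidHom.snd G₁ (ι →₀ ℤ)).comp e.toAddMonoidHom) with hf
  have hfd : ∀ d ∈ D, f d = 0 := by
    intro d hd
    have : β ∉ ((e d).2.support : Set ι) := fun hmem =>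
      hβ (Set.mem_biUnion hd hmem)
    simpa [f, Finsupp.mem_support_iff, not_not] using
      (by simpa [Finsupp.mem_support_iff] using this : (e d).2 β = 0)
  have hdense : Dense {x : G | f x = 0} :=
    hDd.mono fun d hd => hfd d hd
  set x : G := e.symm (0, Finsupp.single β 1) with hx
  have hfx : f x ≠ 0 := by
    have : f x = (Finsupp.single β 1 : ι →₀ ℤ) β := by
      simp [f, x]
    rw [this, Finsupp.single_eq_same]
    norm_num
  exact dudley f hdense x hfx
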